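/- Let d ≥ 2 and n ≥ 1 be integers and let t be an integer with 1 ≤ t ≤ n−1. Let B be a nonempty finite set of d-ary strings of length n that pairwise agree in their first n−t coordinates. For an integer j with 0 ≤ j ≤ n−t−1, the number of d-ary strings v of length n with v ∉ B such that pre(v_{1..n−1}, b_{1..n−1}) = j for some b ∈ B equals d^{n−j} − d^{n−1−j}. -/

import Mathlib

/-- Length of the longest common prefix of the `(n-1)`-prefixes `s₁⋯s_{n-1}` and
`s'₁⋯s'_{n-1}` of two `d`-ary strings of length `n`: the largest `p ≤ n-1` such
that `s i = s' i` for all (0-indexed) `i < p`. -/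
def strPre (d n : ℕ) (s s' : Fin n → Fin d) : ℕ :=
  ((Finset.range n).filter (fun p => ∀ i : Fin n, (i : ℕ) < p → s i = s' i)).sup id

/-- Length of the longest common suffix of the `(n-1)`-prefixes `s₁⋯s_{n-1}` and
`s'₁⋯s'_{n-1}` of two `d`-ary strings of length `n`: the largest `q ≤ n-1` such
that `s i = s' i` for all (0-indexed) `i` with `n-1-q ≤ i < n-1`. -/
def strSuf (d n : ℕ) (s s' : Fin n → Fin d) : ℕ :=
  ((Finset.range n).filter
    (fun q => ∀ i : Fin n, n - 1 - q ≤ (i : ℕ) → (i : ℕ) < n - 1 → s i = s' i)).sup id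

/-- `|B_j| = d^{n-j} - d^{n-1-j}` for `0 ≤ j ≤ n-t-1`, where `B` is a nonempty
set of outputs lying in one window (all agreeing in the first `n-t`
coordinates) and `B_j` is the set of outputs `v ∉ B` whose `(n-1)`-prefix
shares a prefix of length exactly `j` with that of some member of `B`. -/
lemma strPre_eq_iff' (d n : ℕ) (s s' : Fin n → Fin d) (j : ℕ) (hj : j + 1 < n) :
    strPre d n s s' = j ↔
      (∀ i : Fin n, (i : ℕ) < j → s i = s' i) ∧
        s ⟨j, by omega⟩ ≠ s' ⟨j, by omega⟩ := by
  constructor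
  · intro h
    have hne : ((Finset.range n).filter
        (fun p => ∀ i : Fin n, (i : ℕ) < p → s i = s' i)).Nonempty := by
      refine ⟨0, ?_⟩
      simp only [Finset.mem_filter, Finset.mem_range]
      exact ⟨by omega, fun i hi => absurd hi (by omega)⟩
    obtain ⟨p, hp, hsup⟩ := Finset.exists_mem_eq_sup _ hne id
    have hpj : p = j := by rw [strPre, hsup] at h; exact h
    subst hpj
    simp only [Finset.mem_filter, Finset.mem_range] at hp
    refine ⟨hp.2, ?_⟩
    intro heq
    have hmem : p + 1 ∈ ((Finset.range n).filter
        (fun q => ∀ i : Fin n, (i : ℕ) < q → s i = s' i)) := by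
      simp only [Finset.mem_filter, Finset.mem_range]
      refine ⟨hj, fun i hi => ?_⟩
      rcases Nat.lt_or_ge (i : ℕ) p with h' | h'
      · exact hp.2 i h'
      · have : (i : ℕ) = p := by omega
        have : i = ⟨p, by omega⟩ := Fin.ext this
        rw [this]; exact heq
    have := Finset.le_sup (f := id) hmem
    rw [strPre] at h
    rw [h] at this
    simp at this
  · rintro ⟨h1, h2⟩
    apply le_antisymm
    · apply Finset.sup_le
      intro p hp
      simp only [Finset.mem_filter, Finset.mem_range] at hp
      by_contra hlt
      push_neg at hlt
      exact h2 (hp.2 ⟨j, by omega⟩ hlt)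
    · apply Finset.le_sup (f := id)
      simp only [Finset.mem_filter, Finset.mem_range]
      exact ⟨by omega, h1⟩

theorem stmt_4 (d n t : ℕ) (hd : 2 ≤ d) (hn : 1 ≤ n) (ht1 : 1 ≤ t) (ht2 : t ≤ n - 1)
    (B : Finset (Fin n → Fin d)) (hBne : B.Nonempty)
    (hB : ∀ b ∈ B, ∀ b' ∈ B, ∀ i : Fin n, (i : ℕ) < n - t → b i = b' i)
    (j : ℕ) (hj : j ≤ n - t - 1) :
    (Finset.univ.filter (fun v : Fin n → Fin d =>
        v ∉ B ∧ ∃ b ∈ B, strPre d n v b = j)).card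
      = d ^ (n - j) - d ^ (n - 1 - j) := by
  obtain ⟨b0, hb0⟩ := hBne
  have hn2 : 2 ≤ n := by omega
  have hjnt : j < n - t := by omega
  have hjlt : j + 1 < n := by omega
  have hjn : j < n := by omega
  set jj : Fin n := ⟨j, hjn⟩ with hjj
  classical
  set A : Fin n → Finset (Fin d) := fun i =>
    if (i : ℕ) < j then {b0 i} else if (i : ℕ) = j then {b0 jj}ᶜ else Finset.univ with hA
  have hset : (Finset.univ.filter (fun v : Fin n → Fin d =>
      v ∉ B ∧ ∃ b ∈ B, strPre d n v b = j)) = Fintype.piFinset A := by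
    ext v
    simp only [Finset.mem_filter, Finset.mem_univ, true_and, Fintype.mem_piFinset]
    constructor
    · rintro ⟨hvB, b, hbB, hpre⟩
      rw [strPre_eq_iff' d n v b j hjlt] at hpre
      obtain ⟨h1, h2⟩ := hpre
      intro i
      by_cases hi : (i : ℕ) < j
      · simp only [hA, hi, if_pos, Finset.mem_singleton]
        rw [h1 i hi]
        exact hB b hbB b0 hb0 i (by omega)
      · by_cases hi2 : (i : ℕ) = j
        · have hij : i = jj := Fin.ext hi2
          subst hij
          simp only [hA, hi, if_neg, hi2, if_pos, Finset.mem_compl, Finset.mem_singleton,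
            not_false_iff]
          have hbb0 : b jj = b0 jj := hB b hbB b0 hb0 jj (by simp [hjj]; omega)
          rw [if_neg (lt_irrefl j), Finset.mem_compl, Finset.mem_singleton]
          intro hcon
          exact h2 (by rw [show (⟨j, by omega⟩ : Fin n) = jj from rfl]; rw [hcon, ← hbb0])
        · simp [hA, hi, hi2]
    · intro hv
      have h1 : ∀ i : Fin n, (i : ℕ) < j → v i = b0 i := by
        intro i hi
        have := hv i
        simpa [hA, hi] using this
      have h2 : v jj ≠ b0 jj := by
        have := hv jj
        simp only [hA] at this
        rw [if_neg (by simp [hjj]), if_pos (by simp [hjj])] at this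
        simpa using this
      have hvB : v ∉ B := by
        intro hvB
        exact h2 (hB v hvB b0 hb0 jj (by simp [hjj]; omega))
      refine ⟨hvB, b0, hb0, ?_⟩
      rw [strPre_eq_iff' d n v b0 j hjlt]
      exact ⟨h1, h2⟩
  rw [hset, Fintype.card_piFinset]
  have hcard : ∀ i : Fin n, (A i).card =
      if (i : ℕ) < j then 1 else if (i : ℕ) = j then d - 1 else d := by
    intro i
    by_cases hi : (i : ℕ) < j
    · simp [hA, hi]
    · by_cases hi2 : (i : ℕ) = j
      · simp [hA, hi, hi2, Finset.card_compl]
      · simp [hA, hi, hi2]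
  calc ∏ i : Fin n, (A i).card
      = ∏ i ∈ Finset.range n, (if i < j then 1 else if i = j then d - 1 else d) := by
        rw [← Fin.prod_univ_eq_prod_range (fun i => if i < j then 1 else if i = j then d - 1 else d) n]
        exact Finset.prod_congr rfl (fun i _ => hcard i)
    _ = (∏ i ∈ Finset.Ico 0 j, (if i < j then 1 else if i = j then d - 1 else d)) *
        ∏ i ∈ Finset.Ico j n, (if i < j then 1 else if i = j then d - 1 else d) := by
        rw [Finset.range_eq_Ico, ← Finset.prod_Ico_consecutive _ (Nat.zero_le j) (le_of_lt hjn)]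
    _ = (d - 1) * d ^ (n - 1 - j) := by
        rw [Finset.prod_eq_one (fun i hi => by
          simp only [Finset.mem_Ico] at hi; simp [hi.2]), one_mul,
          Finset.prod_eq_prod_Ico_succ_bot hjn]
        simp only [lt_irrefl, if_neg, if_pos, Nat.lt_irrefl, not_false_iff]
        have : ∏ i ∈ Finset.Ico (j + 1) n, (if i < j then 1 else if i = j then d - 1 else d) =
            ∏ _i ∈ Finset.Ico (j + 1) n, d := by
          refine Finset.prod_congr rfl (fun i hi => ?_)
          simp only [Finset.mem_Ico] at hi
          rw [if_neg (by omega), if_neg (by omega)]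
        rw [this, Finset.prod_const, Nat.card_Ico,
          show n - (j + 1) = n - 1 - j from by omega]
    _ = d ^ (n - j) - d ^ (n - 1 - j) := by
        rw [Nat.sub_mul, one_mul]
        congr 1
        rw [show n - j = (n - 1 - j) + 1 from by omega, pow_succ]
        ring
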